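/- Let G be a topological group admitting a compact open subgroup K such that the set of left cosets of K in G is countable. Let k be an uncountable algebraically closed field and V an irreducible smooth representation of G over k. Then V has a central character: for every element z of the center of G there exists a scalar c in k such that z·v = c v for all v in V. -/

import Mathlib

section Defs

variable {k : Type*} [Field k] {G : Type*} [Group G] [TopologicalSpace G]
variable {V : Type*} [AddCommGroup V] [Module k V]

/-- A representation of a topological group is smooth if the stabilizer of every
vector is an open subset. -/
def IsSmoothRep (ρ : Representation k G V) : Prop :=
  ∀ v : V, IsOpen {g : G | ρ g v = v}

/-- The subspace of vectors fixed by every element of a subset `S` of `G`. -/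
def fixedBy (ρ : Representation k G V) (S : Set G) : Submodule k V where
  carrier := {v : V | ∀ g ∈ S, ρ g v = v}
  add_mem' := by intro a b ha hb g hg; simp [map_add, ha g hg, hb g hg]
  zero_mem' := by intro g hg; simp
  smul_mem' := by intro c a ha g hg; simp [ha g hg]

/-- A subspace is `G`-stable if it is preserved by the action. -/
def IsStableRep (ρ : Representation k G V) (W : Submodule k V) : Prop :=
  ∀ g : G, ∀ v ∈ W, ρ g v ∈ W

/-- A representation is irreducible if it is nonzero and its only `G`-stable
subspaces are `⊥` and `⊤`. -/
def IsIrreducibleRep (ρ : Representation k G V) : Prop :=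
  (∃ v : V, v ≠ 0) ∧ ∀ W : Submodule k V, IsStableRep ρ W → W = ⊥ ∨ W = ⊤

/-- A representation is admissible if it is smooth and its fixed vectors under every
open subgroup form a finite-dimensional space. -/
def IsAdmissibleRep (ρ : Representation k G V) : Prop :=
  IsSmoothRep ρ ∧
    ∀ J : Subgroup G, IsOpen (J : Set G) → FiniteDimensional k ↥(fixedBy ρ (J : Set G))

/-- A (profinite) topological group is pro-`p` if every open normal subgroup has
index a power of `p`. -/
def IsProP (p : ℕ) (G : Type*) [Group G] [TopologicalSpace G] : Prop :=
  ∀ N : Subgroup G, N.Normal → IsOpen (N : Set G) → ∃ n : ℕ, N.index = p ^ n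

end Defs


open Polynomial in
lemma aux_aeval_injective {k V : Type*} [Field k] [IsAlgClosed k] [AddCommGroup V] [Module k V]
    (T : Module.End k V) (h : ∀ c : k, Function.Injective (T - c • (1 : Module.End k V)))
    (p : Polynomial k) (hp : p ≠ 0) : Function.Injective (Polynomial.aeval T p) := by
  have key : ∀ n : ℕ, ∀ p : Polynomial k, p ≠ 0 → p.natDegree = n →
      Function.Injective (Polynomial.aeval T p) := by
    intro n
    induction n using Nat.strong_induction_on with
    | _ n ih =>
    intro p hp hn
    rcases eq_or_ne n 0 with rfl | hn0
    · obtain ⟨a, rfl⟩ : ∃ a, p = C a := ⟨p.coeff 0, p.eq_C_of_natDegree_eq_zero hn⟩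
      have ha : a ≠ 0 := by simpa using hp
      intro x y hxy
      simp only [aeval_C, Module.algebraMap_end_apply] at hxy
      exact smul_right_injective V ha hxy
    · have hdeg : 0 < p.degree :=
        natDegree_pos_iff_degree_pos.mp (hn ▸ Nat.pos_of_ne_zero hn0)
      obtain ⟨r, hr⟩ := IsAlgClosed.exists_root p hdeg.ne'
      obtain ⟨q, hq⟩ := (dvd_iff_isRoot.mpr hr)
      have hq0 : q ≠ 0 := by rintro rfl; rw [mul_zero] at hq; exact hp hq
      have hXr : (X - C r : Polynomial k) ≠ 0 := X_sub_C_ne_zero r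
      have hdq : q.natDegree < n := by
        have h2 := natDegree_mul hXr hq0
        rw [← hq, natDegree_X_sub_C] at h2
        omega
      have h1 : Function.Injective (Polynomial.aeval T (X - C r)) := by
        have he : Polynomial.aeval T (X - C r) = T - r • (1 : Module.End k V) := by
          simp [Module.algebraMap_end_eq_smul_id]; rfl
        rw [he]; exact h r
      have h2 := ih q.natDegree hdq q hq0 rfl
      rw [hq, map_mul]
      exact fun x y hxy => h2 (h1 (by simpa [Module.End.mul_apply] using hxy))
  exact key p.natDegree p hp rfl

open Polynomial in
lemma aux_li {k V : Type*} [Field k] [IsAlgClosed k] [AddCommGroup V] [Module k V]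
    (T : Module.End k V) (h : ∀ c : k, Function.Injective (T - c • (1 : Module.End k V)))
    (v₀ : V) (hv₀ : v₀ ≠ 0) (u : k → V)
    (hu : ∀ c : k, (T - c • (1 : Module.End k V)) (u c) = v₀) :
    LinearIndependent k u := by
  classical
  rw [linearIndependent_iff']
  intro s g hsum i hi
  by_contra hgi
  set p : Polynomial k := ∑ j ∈ s, C (g j) * ∏ l ∈ s.erase j, (X - C l) with hp
  have hpne : p ≠ 0 := by
    have heval : p.eval i = g i * ∏ l ∈ s.erase i, (i - l) := by
      rw [hp, eval_finset_sum]
      rw [Finset.sum_eq_single_of_mem i hi]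
      · simp [eval_prod]
      · intro j hj hji
        have hmem : i ∈ s.erase j := Finset.mem_erase.mpr ⟨(Ne.symm hji), hi⟩
        rw [eval_mul, eval_prod, Finset.prod_eq_zero hmem (by simp)]
        ring
    have hne : p.eval i ≠ 0 := by
      rw [heval]
      refine mul_ne_zero hgi (Finset.prod_ne_zero_iff.mpr ?_)
      intro l hl
      have : l ≠ i := Finset.ne_of_mem_erase hl
      exact sub_ne_zero.mpr (Ne.symm this)
    intro h0; rw [h0] at hne; simp at hne
  have hXc : ∀ j : k, Polynomial.aeval T (X - C j) = T - j • (1 : Module.End k V) := by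
    intro j; simp [Module.algebraMap_end_eq_smul_id]; rfl
  have hterm : ∀ j ∈ s, (Polynomial.aeval T (∏ l ∈ s.erase j, (X - C l))) v₀
      = (Polynomial.aeval T (∏ l ∈ s, (X - C l))) (u j) := by
    intro j hj
    rw [← hu j, ← hXc j, ← Module.End.mul_apply, ← map_mul, Finset.prod_erase_mul s _ hj]
  have hzero : (Polynomial.aeval T p) v₀ = 0 := by
    rw [hp, map_sum, LinearMap.sum_apply]
    have : ∀ j ∈ s, (Polynomial.aeval T (C (g j) * ∏ l ∈ s.erase j, (X - C l))) v₀
        = g j • (Polynomial.aeval T (∏ l ∈ s, (X - C l))) (u j) := by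
      intro j hj
      rw [map_mul, aeval_C, Module.End.mul_apply, Module.algebraMap_end_apply, ← hterm j hj]
    rw [Finset.sum_congr rfl this]
    have heq : ∑ x ∈ s, g x • ((Polynomial.aeval T (∏ l ∈ s, (X - C l))) (u x))
        = (Polynomial.aeval T (∏ l ∈ s, (X - C l))) (∑ x ∈ s, g x • u x) := by
      rw [map_sum]
      exact Finset.sum_congr rfl fun x _ => (map_smul _ _ _).symm
    rw [heq, hsum, map_zero]
  have := aux_aeval_injective T h p hpne (a₂ := 0) (by simpa using hzero)
  exact hv₀ this

/-- if `G` has a compact open subgroup with countably many left cosets and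
`k` is uncountable algebraically closed, then every irreducible smooth representation of
`G` over `k` has a central character. -/
theorem statement8 {G : Type*} [Group G] [TopologicalSpace G] [IsTopologicalGroup G]
    (K : Subgroup G) (hKc : IsCompact (K : Set G)) (hKo : IsOpen (K : Set G))
    (hcount : Countable (G ⧸ K))
    {k : Type*} [Field k] [IsAlgClosed k] [Uncountable k]
    {V : Type*} [AddCommGroup V] [Module k V]
    (ρ : Representation k G V) (hsm : IsSmoothRep ρ) (hirr : IsIrreducibleRep ρ) :
    ∀ z ∈ Subgroup.center G, ∃ c : k, ∀ v : V, ρ z v = c • v := by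
  classical
  intro z hz
  obtain ⟨v₀, hv₀⟩ := hirr.1
  -- the stabilizer of v₀ is an open subgroup
  set H : Subgroup G :=
    { carrier := {g : G | ρ g v₀ = v₀}
      one_mem' := by simp
      mul_mem' := by
        intro a b ha hb
        simp only [Set.mem_setOf_eq] at *
        rw [map_mul, Module.End.mul_apply, hb, ha]
      inv_mem' := by
        intro a ha
        simp only [Set.mem_setOf_eq] at *
        conv_lhs => rw [← ha]
        rw [← Module.End.mul_apply, ← map_mul, inv_mul_cancel, map_one, Module.End.one_apply] }
    with hHdef
  have hHo : IsOpen (H : Set G) := hsm v₀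
  set L : Subgroup G := K ⊓ H with hLdef
  have hLo : IsOpen (L : Set G) := by
    rw [hLdef, Subgroup.coe_inf]
    exact hKo.inter hHo
  have : CompactSpace K := isCompact_iff_compactSpace.mp hKc
  have hopenKL : IsOpen ((L.subgroupOf K : Subgroup K) : Set K) := by
    have he : ((L.subgroupOf K : Subgroup K) : Set K) = (Subtype.val) ⁻¹' (L : Set G) := rfl
    rw [he]
    exact hLo.preimage continuous_subtype_val
  have hfin : Finite (↥K ⧸ L.subgroupOf K) :=
    Subgroup.quotient_finite_of_isOpen _ hopenKL
  have hcountL : Countable (G ⧸ L) := by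
    have e := Subgroup.quotientEquivProdOfLE (inf_le_left : L ≤ K)
    exact Countable.of_equiv _ e.symm
  -- orbit of v₀ is countable
  have hwd : ∀ a b : G, (QuotientGroup.leftRel L).r a b → ρ a v₀ = ρ b v₀ := by
    intro a b hab
    rw [QuotientGroup.leftRel_apply] at hab
    have hmem : a⁻¹ * b ∈ H := (inf_le_right : L ≤ H) hab
    have hfix : ρ (a⁻¹ * b) v₀ = v₀ := hmem
    conv_lhs => rw [← hfix]
    rw [← Module.End.mul_apply, ← map_mul, mul_inv_cancel_left]
  set φ : G ⧸ L → V := Quotient.lift (fun g : G => ρ g v₀) hwd with hφdef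
  set O : Set V := Set.range φ with hOdef
  have hOc : O.Countable := Set.countable_range φ
  have hmemO : ∀ g : G, ρ g v₀ ∈ O := fun g => ⟨QuotientGroup.mk g, rfl⟩
  have hspan : Submodule.span k O = ⊤ := by
    have hstab : IsStableRep ρ (Submodule.span k O) := by
      intro g v hv
      have hmap : Submodule.map (ρ g) (Submodule.span k O) ≤ Submodule.span k O := by
        rw [Submodule.map_span]
        apply Submodule.span_mono
        rintro _ ⟨_, ⟨q, rfl⟩, rfl⟩
        obtain ⟨a, rfl⟩ := QuotientGroup.mk_surjective q
        have : φ (QuotientGroup.mk a) = ρ a v₀ := rfl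
        rw [this, ← Module.End.mul_apply, ← map_mul]
        exact hmemO (g * a)
      exact hmap ⟨v, hv, rfl⟩
    rcases hirr.2 _ hstab with h | h
    · exfalso
      have hmem : v₀ ∈ Submodule.span k O := by
        apply Submodule.subset_span
        have := hmemO 1
        rwa [map_one, Module.End.one_apply] at this
      rw [h] at hmem
      exact hv₀ ((Submodule.mem_bot k).mp hmem)
    · exact h
  have hrank : Module.rank k V ≤ Cardinal.aleph0 := by
    have h1 := rank_span_le (R := k) O
    rw [hspan, rank_top] at h1
    exact h1.trans hOc.le_aleph0
  -- T = ρ z commutes with the action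
  set T : Module.End k V := ρ z with hTdef
  have hcomm : ∀ g : G, ∀ v : V, ρ g (T v) = T (ρ g v) := by
    intro g v
    rw [hTdef, ← Module.End.mul_apply, ← Module.End.mul_apply, ← map_mul, ← map_mul,
      Subgroup.mem_center_iff.mp hz g]
  by_contra hcon
  push_neg at hcon
  have hker : ∀ c : k, LinearMap.ker (T - c • (1 : Module.End k V)) = ⊥ := by
    intro c
    have hstab : IsStableRep ρ (LinearMap.ker (T - c • (1 : Module.End k V))) := by
      intro g v hv
      simp only [LinearMap.mem_ker, LinearMap.sub_apply, LinearMap.smul_apply,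
        Module.End.one_apply] at *
      rw [← hcomm g v, ← map_smul, ← map_sub, hv, map_zero]
    rcases hirr.2 _ hstab with h | h
    · exact h
    · exfalso
      obtain ⟨v, hv⟩ := hcon c
      apply hv
      have hm : v ∈ LinearMap.ker (T - c • (1 : Module.End k V)) := h ▸ Submodule.mem_top
      simpa [LinearMap.sub_apply, LinearMap.smul_apply, Module.End.one_apply,
        sub_eq_zero] using hm
  have hinj : ∀ c : k, Function.Injective (T - c • (1 : Module.End k V)) :=
    fun c => LinearMap.ker_eq_bot.mp (hker c)
  have hrange : ∀ c : k, LinearMap.range (T - c • (1 : Module.End k V)) = ⊤ := by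
    intro c
    have hstab : IsStableRep ρ (LinearMap.range (T - c • (1 : Module.End k V))) := by
      rintro g _ ⟨w, rfl⟩
      refine ⟨ρ g w, ?_⟩
      simp only [LinearMap.sub_apply, LinearMap.smul_apply, Module.End.one_apply]
      rw [← hcomm g w, ← map_smul, ← map_sub]
    rcases hirr.2 _ hstab with h | h
    · exfalso
      have h0 : (T - c • (1 : Module.End k V)) v₀ = 0 := by
        have hm : (T - c • (1 : Module.End k V)) v₀
            ∈ LinearMap.range (T - c • (1 : Module.End k V)) := LinearMap.mem_range_self _ v₀
        rw [h] at hm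
        exact (Submodule.mem_bot k).mp hm
      exact hv₀ (hinj c (by rw [h0, map_zero]))
    · exact h
  have hsurj : ∀ c : k, Function.Surjective (T - c • (1 : Module.End k V)) :=
    fun c => LinearMap.range_eq_top.mp (hrange c)
  set u : k → V := fun c => Function.surjInv (hsurj c) v₀ with hudef
  have hu : ∀ c : k, (T - c • (1 : Module.End k V)) (u c) = v₀ :=
    fun c => Function.surjInv_eq (hsurj c) v₀
  have hLI : LinearIndependent k u := aux_li T hinj v₀ hv₀ u hu
  have h1 := hLI.cardinal_lift_le_rank
  have h4 : (Cardinal.mk k) ≤ Cardinal.aleph0 := by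
    rw [← Cardinal.lift_le_aleph0]
    calc Cardinal.lift (Cardinal.mk k) ≤ Cardinal.lift (Module.rank k V) := h1
      _ ≤ Cardinal.lift Cardinal.aleph0 := Cardinal.lift_le.mpr hrank
      _ = Cardinal.aleph0 := Cardinal.lift_aleph0
  have : Countable k := Cardinal.mk_le_aleph0_iff.mp h4
  exact (not_countable (α := k)) this
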